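/- Let (nx, ny, nz) ∈ ℝ³, set γ := √(nx² + ny² + nz²), and let u := exp(i·(nx·σx + ny·σy + nz·σz)) ∈ SU(2). Let C(u) denote the controlled-u gate, i.e., the 4×4 block-diagonal matrix diag(I₂, u), which applies u to the target qubit when the control qubit is in state |1⟩ and acts as the identity otherwise. Then there exist k1, k2 ∈ SU(2) such that C(u) = (I₂ ⊗ k1)·Uf(γ)·(I₂ ⊗ k2); in particular, C(u) is locally equivalent to Uf(γ). -/

import Mathlib

open Matrix Kronecker

noncomputable section

/-- The Pauli matrix `σx`. -/
def σx : Matrix (Fin 2) (Fin 2) ℂ := !![0, 1; 1, 0]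

/-- The Pauli matrix `σy`. -/
def σy : Matrix (Fin 2) (Fin 2) ℂ := !![0, -Complex.I; Complex.I, 0]

/-- The Pauli matrix `σz`. -/
def σz : Matrix (Fin 2) (Fin 2) ℂ := !![1, 0; 0, -1]

/-- Kronecker (tensor) product of two `2×2` matrices, as a `4×4` matrix, with
the standard index identification `(m, n) ↦ 2*m + n`. -/
def tensor (a b : Matrix (Fin 2) (Fin 2) ℂ) : Matrix (Fin 4) (Fin 4) ℂ :=
  Matrix.reindex finProdFinEquiv finProdFinEquiv (a ⊗ₖ b)

/-- `Uf γ = exp(i (γ/2) σz ⊗ σz)`, representing (up to local equivalence) a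
Controlled-`U` gate. -/
def Uf (γ : ℝ) : Matrix (Fin 4) (Fin 4) ℂ :=
  NormedSpace.exp ((((γ : ℂ) / 2) * Complex.I) • tensor σz σz)

/-- The canonical gate
`A c1 c2 c3 = exp(i (c1/2) σx⊗σx) · exp(i (c2/2) σy⊗σy) · exp(i (c3/2) σz⊗σz)`. -/
def A (c1 c2 c3 : ℝ) : Matrix (Fin 4) (Fin 4) ℂ :=
  NormedSpace.exp ((((c1 : ℂ) / 2) * Complex.I) • tensor σx σx) *
    NormedSpace.exp ((((c2 : ℂ) / 2) * Complex.I) • tensor σy σy) *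
    NormedSpace.exp ((((c3 : ℂ) / 2) * Complex.I) • tensor σz σz)

/-- Membership in `SU(2)`: unitary with determinant one. -/
def IsSU2 (k : Matrix (Fin 2) (Fin 2) ℂ) : Prop :=
  k ∈ Matrix.unitaryGroup (Fin 2) ℂ ∧ k.det = 1

/-- Membership in `SU(4)`: unitary with determinant one. -/
def IsSU4 (U : Matrix (Fin 4) (Fin 4) ℂ) : Prop :=
  U ∈ Matrix.unitaryGroup (Fin 4) ℂ ∧ U.det = 1

/-- A local gate is a tensor product `k1 ⊗ k2` of two `SU(2)` gates. -/
def IsLocalGate (k : Matrix (Fin 4) (Fin 4) ℂ) : Prop :=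
  ∃ k1 k2 : Matrix (Fin 2) (Fin 2) ℂ, IsSU2 k1 ∧ IsSU2 k2 ∧ k = tensor k1 k2

/-- `U` and `V` are locally equivalent if `U = e^{iφ} k V k'` for some real `φ`
and local gates `k`, `k'`. -/
def LocallyEquivalent (U V : Matrix (Fin 4) (Fin 4) ℂ) : Prop :=
  ∃ (φ : ℝ) (k k' : Matrix (Fin 4) (Fin 4) ℂ), IsLocalGate k ∧ IsLocalGate k' ∧
    U = Complex.exp (φ * Complex.I) • (k * V * k')

/-- `circuit W k n = k n * W * k (n-1) * W * ⋯ * W * k 0`: the alternating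
circuit consisting of `n` applications of `W` interleaved with the gates `k i`. -/
def circuit (W : Matrix (Fin 4) (Fin 4) ℂ) (k : ℕ → Matrix (Fin 4) (Fin 4) ℂ) :
    ℕ → Matrix (Fin 4) (Fin 4) ℂ
  | 0 => k 0
  | n + 1 => k (n + 1) * W * circuit W k n

/-- `U` is generated by `n` applications of the gate `W` together with local gates:
`U = e^{iφ} · k_n · W · k_{n-1} · W ⋯ W · k_0` for some real `φ` and local gates `k_i`. -/
def GeneratedBy (W : Matrix (Fin 4) (Fin 4) ℂ) (n : ℕ) (U : Matrix (Fin 4) (Fin 4) ℂ) : Prop :=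
  ∃ (φ : ℝ) (k : ℕ → Matrix (Fin 4) (Fin 4) ℂ),
    (∀ i, i ≤ n → IsLocalGate (k i)) ∧ U = Complex.exp (φ * Complex.I) • circuit W k n

/-- The controlled-`u` gate `diag(I₂, u)`, applying `u` to the target qubit when
the control qubit is `|1⟩`. -/
def controlled (u : Matrix (Fin 2) (Fin 2) ℂ) : Matrix (Fin 4) (Fin 4) ℂ :=
  Matrix.reindex finSumFinEquiv finSumFinEquiv
    (Matrix.fromBlocks (1 : Matrix (Fin 2) (Fin 2) ℂ) 0 0 u)

/-! ### Auxiliary lemmas -/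

lemma prod_of_sum : ∀ s : Fin 2 ⊕ Fin 2, (finProdFinEquiv (m:=2) (n:=2)).symm (finSumFinEquiv s)
    = (Sum.elim (fun _ => (0:Fin 2)) (fun _ => (1:Fin 2)) s, Sum.elim id id s) := by decide

lemma ext4 {M N : Matrix (Fin 4) (Fin 4) ℂ}
    (h : ∀ s t : Fin 2 ⊕ Fin 2, M (finSumFinEquiv s) (finSumFinEquiv t)
      = N (finSumFinEquiv s) (finSumFinEquiv t)) : M = N := by
  ext i j
  obtain ⟨s, rfl⟩ := (finSumFinEquiv (m:=2) (n:=2)).surjective i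
  obtain ⟨t, rfl⟩ := (finSumFinEquiv (m:=2) (n:=2)).surjective j
  exact h s t

lemma tensor_apply_sum (a b : Matrix (Fin 2) (Fin 2) ℂ) (s t : Fin 2 ⊕ Fin 2) :
    tensor a b (finSumFinEquiv s) (finSumFinEquiv t) =
      a (Sum.elim (fun _ => (0:Fin 2)) (fun _ => (1:Fin 2)) s)
        (Sum.elim (fun _ => (0:Fin 2)) (fun _ => (1:Fin 2)) t) *
      b (Sum.elim id id s) (Sum.elim id id t) := by
  rcases s with s | s <;> rcases t with t | t <;> fin_cases s <;> fin_cases t <;> rfl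

lemma reindex_apply_sum (B : Matrix (Fin 2 ⊕ Fin 2) (Fin 2 ⊕ Fin 2) ℂ) (s t : Fin 2 ⊕ Fin 2) :
    Matrix.reindex finSumFinEquiv finSumFinEquiv B (finSumFinEquiv s) (finSumFinEquiv t) = B s t := by
  simp

lemma my_reindex_mul (M N : Matrix (Fin 2 ⊕ Fin 2) (Fin 2 ⊕ Fin 2) ℂ) :
    Matrix.reindex finSumFinEquiv finSumFinEquiv M * Matrix.reindex finSumFinEquiv finSumFinEquiv N
      = Matrix.reindex finSumFinEquiv finSumFinEquiv (M * N) := by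
  simp only [Matrix.reindex_apply]
  exact Matrix.submatrix_mul_equiv M N _ finSumFinEquiv.symm _

lemma tensor_one_eq (b : Matrix (Fin 2) (Fin 2) ℂ) :
    tensor 1 b = Matrix.reindex finSumFinEquiv finSumFinEquiv (Matrix.fromBlocks b 0 0 b) := by
  apply ext4
  intro s t
  rw [tensor_apply_sum, reindex_apply_sum]
  rcases s with s | s <;> rcases t with t | t <;>
    simp [Matrix.one_apply, Matrix.fromBlocks]

lemma reindex_exp_diag (w : Fin 2 ⊕ Fin 2 → ℂ) :
    NormedSpace.exp (Matrix.reindex finSumFinEquiv finSumFinEquiv (Matrix.diagonal w)) =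
      Matrix.reindex finSumFinEquiv finSumFinEquiv
        (Matrix.diagonal (fun s => Complex.exp (w s))) := by
  rw [Matrix.reindex_apply, Matrix.submatrix_diagonal_equiv, Matrix.exp_diagonal,
    Matrix.reindex_apply, Matrix.submatrix_diagonal_equiv]
  have hw : NormedSpace.exp (w ∘ ⇑(finSumFinEquiv (m:=2) (n:=2)).symm)
      = (fun s => Complex.exp (w s)) ∘ ⇑(finSumFinEquiv (m:=2) (n:=2)).symm := by
    funext i
    simp [Complex.exp_eq_exp_ℂ]
  rw [hw]

lemma Uf_eq (γ : ℝ) :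
    Uf γ = Matrix.reindex finSumFinEquiv finSumFinEquiv
      (Matrix.fromBlocks
        (Matrix.diagonal ![Complex.exp (((γ:ℂ)/2) * Complex.I), Complex.exp (-(((γ:ℂ)/2) * Complex.I))])
        0 0
        (Matrix.diagonal ![Complex.exp (-(((γ:ℂ)/2) * Complex.I)), Complex.exp (((γ:ℂ)/2) * Complex.I)])) := by
  have h1 : ((((γ:ℂ)/2) * Complex.I)) • tensor σz σz =
      Matrix.reindex finSumFinEquiv finSumFinEquiv
        (Matrix.diagonal (Sum.elim ![((γ:ℂ)/2) * Complex.I, -(((γ:ℂ)/2) * Complex.I)]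
          ![-(((γ:ℂ)/2) * Complex.I), ((γ:ℂ)/2) * Complex.I])) := by
    apply ext4
    intro s t
    rw [Matrix.smul_apply, tensor_apply_sum, reindex_apply_sum]
    rcases s with s | s <;> rcases t with t | t <;> fin_cases s <;> fin_cases t <;>
      simp [σz, Matrix.diagonal_apply] <;> ring
  rw [Uf, h1, reindex_exp_diag, Matrix.fromBlocks_diagonal]
  have hv : (fun s => Complex.exp ((Sum.elim ![((γ:ℂ)/2) * Complex.I, -(((γ:ℂ)/2) * Complex.I)]
        ![-(((γ:ℂ)/2) * Complex.I), ((γ:ℂ)/2) * Complex.I]) s))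
      = (![Complex.exp (((γ:ℂ)/2) * Complex.I), Complex.exp (-(((γ:ℂ)/2) * Complex.I))] ⊕ᵥ
         ![Complex.exp (-(((γ:ℂ)/2) * Complex.I)), Complex.exp (((γ:ℂ)/2) * Complex.I)]) := by
    funext s
    rcases s with s | s <;> fin_cases s <;> rfl
  rw [hv]

set_option maxHeartbeats 1000000 in
lemma exists_k1 (nx ny nz γ : ℝ) (hγ : γ = Real.sqrt (nx^2+ny^2+nz^2)) :
    ∃ k1 : Matrix (Fin 2) (Fin 2) ℂ, k1 ∈ Matrix.unitaryGroup (Fin 2) ℂ ∧ k1.det = 1 ∧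
      ((nx:ℂ) • σx + ((ny:ℂ)) • σy + ((nz:ℂ)) • σz)
        = k1 * Matrix.diagonal ![(-γ : ℂ), (γ:ℂ)] * star k1 := by
  have hγ0 : 0 ≤ γ := hγ ▸ Real.sqrt_nonneg _
  have hγ2 : γ^2 = nx^2+ny^2+nz^2 := by
    rw [hγ]; exact Real.sq_sqrt (by positivity)
  by_cases hpos : 0 < γ + nz
  · have hγpos : 0 < γ := by nlinarith [sq_nonneg nx, sq_nonneg ny, sq_nonneg (γ + nz)]
    obtain ⟨r, hrpos, hr2⟩ : ∃ r : ℝ, 0 < r ∧ r^2 = 2*γ*(γ+nz) :=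
      ⟨Real.sqrt (2*γ*(γ+nz)), Real.sqrt_pos.2 (by positivity), Real.sq_sqrt (by positivity)⟩
    have hrC : ((r:ℂ))^2 = 2*(γ:ℂ)*((γ:ℂ)+(nz:ℂ)) := by
      exact_mod_cast congrArg (fun x : ℝ => (x : ℂ)) hr2
    have hγ2C : ((γ:ℂ))^2 = (nx:ℂ)^2+(ny:ℂ)^2+(nz:ℂ)^2 := by
      exact_mod_cast congrArg (fun x : ℝ => (x : ℂ)) hγ2
    have hrne : ((r:ℂ)) ≠ 0 := by
      simpa using Complex.ofReal_ne_zero.2 hrpos.ne'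
    have hI : (Complex.I)^2 = -1 := Complex.I_sq
    refine ⟨((r:ℂ))⁻¹ • !![(nx:ℂ) - ny*Complex.I, (γ:ℂ)+nz; -((γ:ℂ)+nz), (nx:ℂ) + ny*Complex.I],
      ?_, ?_, ?_⟩
    case _ =>
      rw [Matrix.mem_unitaryGroup_iff]
      ext i j
      fin_cases i <;> fin_cases j <;>
        · simp [Matrix.mul_apply, Fin.sum_univ_two, Matrix.one_apply,
            Matrix.star_eq_conjTranspose, Matrix.conjTranspose_apply, _root_.map_mul, map_add,
            map_sub, map_inv₀, Complex.conj_ofReal, Complex.conj_I]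
          field_simp
          first
          | ring1
          | linear_combination -hγ2C - hrC - (ny:ℂ)^2*hI
          | linear_combination -hγ2C - hrC + (ny:ℂ)^2*hI
    case _ =>
      simp [Matrix.det_fin_two, Matrix.smul_apply]
      field_simp
      first
      | linear_combination -hγ2C - hrC - (ny:ℂ)^2*hI
      | linear_combination -hγ2C - hrC + (ny:ℂ)^2*hI
      | linear_combination hγ2C + hrC - (ny:ℂ)^2*hI
      | linear_combination hγ2C + hrC + (ny:ℂ)^2*hI
    case _ =>
      have hU : (((r:ℂ))⁻¹ • !![(nx:ℂ) - ny*Complex.I, (γ:ℂ)+nz; -((γ:ℂ)+nz), (nx:ℂ) + ny*Complex.I]) *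
          star (((r:ℂ))⁻¹ • !![(nx:ℂ) - ny*Complex.I, (γ:ℂ)+nz; -((γ:ℂ)+nz), (nx:ℂ) + ny*Complex.I]) = 1 := by
        ext i j
        fin_cases i <;> fin_cases j <;>
          · simp [Matrix.mul_apply, Fin.sum_univ_two, Matrix.one_apply,
              Matrix.star_eq_conjTranspose, Matrix.conjTranspose_apply, _root_.map_mul, map_add,
              map_sub, map_inv₀, Complex.conj_ofReal, Complex.conj_I]
            field_simp
            first
            | ring1
            | linear_combination -hγ2C - hrC - (ny:ℂ)^2*hI
            | linear_combination -hγ2C - hrC + (ny:ℂ)^2*hI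
      have h2 : ((nx:ℂ) • σx + ((ny:ℂ)) • σy + ((nz:ℂ)) • σz) *
            (((r:ℂ))⁻¹ • !![(nx:ℂ) - ny*Complex.I, (γ:ℂ)+nz; -((γ:ℂ)+nz), (nx:ℂ) + ny*Complex.I])
          = (((r:ℂ))⁻¹ • !![(nx:ℂ) - ny*Complex.I, (γ:ℂ)+nz; -((γ:ℂ)+nz), (nx:ℂ) + ny*Complex.I]) *
            Matrix.diagonal ![(-γ : ℂ), (γ:ℂ)] := by
        ext i j
        fin_cases i <;> fin_cases j <;>
          · simp [σx, σy, σz, Matrix.mul_apply, Fin.sum_univ_two, Matrix.diagonal_apply,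
              Matrix.smul_apply, Matrix.add_apply]
            field_simp
            first
            | ring1
            | linear_combination hγ2C
            | linear_combination -hγ2C
            | linear_combination -hγ2C - (ny:ℂ)^2*hI
            | linear_combination hγ2C + (ny:ℂ)^2*hI
            | linear_combination (-(1:ℂ) + (ny:ℂ)*Complex.I) * hγ2C - (ny:ℂ)^2*hI
            | linear_combination (-(1:ℂ) - (ny:ℂ)*Complex.I) * hγ2C - (ny:ℂ)^2*hI
            | linear_combination ((1:ℂ) + (ny:ℂ)*Complex.I) * hγ2C + (ny:ℂ)^2*hI
            | linear_combination ((1:ℂ) - (ny:ℂ)*Complex.I) * hγ2C + (ny:ℂ)^2*hI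
            | linear_combination (-(2:ℂ) + (ny:ℂ)*Complex.I) * hγ2C - 2*(ny:ℂ)^2*hI
            | linear_combination (-(2:ℂ) - (ny:ℂ)*Complex.I) * hγ2C - 2*(ny:ℂ)^2*hI
            | linear_combination ((2:ℂ) + (ny:ℂ)*Complex.I) * hγ2C + 2*(ny:ℂ)^2*hI
            | linear_combination ((2:ℂ) - (ny:ℂ)*Complex.I) * hγ2C + 2*(ny:ℂ)^2*hI
      calc ((nx:ℂ) • σx + ((ny:ℂ)) • σy + ((nz:ℂ)) • σz)
          = ((nx:ℂ) • σx + ((ny:ℂ)) • σy + ((nz:ℂ)) • σz) *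
            ((((r:ℂ))⁻¹ • !![(nx:ℂ) - ny*Complex.I, (γ:ℂ)+nz; -((γ:ℂ)+nz), (nx:ℂ) + ny*Complex.I]) *
             star (((r:ℂ))⁻¹ • !![(nx:ℂ) - ny*Complex.I, (γ:ℂ)+nz; -((γ:ℂ)+nz), (nx:ℂ) + ny*Complex.I])) := by
            rw [hU, mul_one]
        _ = (((nx:ℂ) • σx + ((ny:ℂ)) • σy + ((nz:ℂ)) • σz) *
            (((r:ℂ))⁻¹ • !![(nx:ℂ) - ny*Complex.I, (γ:ℂ)+nz; -((γ:ℂ)+nz), (nx:ℂ) + ny*Complex.I])) *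
             star (((r:ℂ))⁻¹ • !![(nx:ℂ) - ny*Complex.I, (γ:ℂ)+nz; -((γ:ℂ)+nz), (nx:ℂ) + ny*Complex.I]) := by
            rw [mul_assoc]
        _ = _ := by rw [h2]
  · have h1 : nz = -γ := by nlinarith [sq_nonneg nx, sq_nonneg ny, sq_nonneg (γ + nz)]
    have h2 : nx = 0 := by nlinarith [sq_nonneg nx, sq_nonneg ny]
    have h3 : ny = 0 := by nlinarith [sq_nonneg nx, sq_nonneg ny]
    refine ⟨1, one_mem _, Matrix.det_one, ?_⟩
    ext i j
    fin_cases i <;> fin_cases j <;>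
      simp [σx, σy, σz, Matrix.diagonal_apply, h1, h2, h3, Matrix.one_apply]

/-- For `u = exp(i(nx σx + ny σy + nz σz))` and `γ = √(nx² + ny² + nz²)`, there are
`k1, k2 ∈ SU(2)` with `C(u) = (I₂ ⊗ k1) · Uf γ · (I₂ ⊗ k2)`; in particular `C(u)`
is locally equivalent to `Uf γ`. -/
theorem stmt19 (nx ny nz γ : ℝ) (hγ : γ = Real.sqrt (nx ^ 2 + ny ^ 2 + nz ^ 2))
    (u : Matrix (Fin 2) (Fin 2) ℂ)
    (hu : u = NormedSpace.exp
      (Complex.I • (((nx : ℝ) : ℂ) • σx + ((ny : ℝ) : ℂ) • σy + ((nz : ℝ) : ℂ) • σz))) :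
    (∃ k1 k2 : Matrix (Fin 2) (Fin 2) ℂ, IsSU2 k1 ∧ IsSU2 k2 ∧
      controlled u = tensor 1 k1 * Uf γ * tensor 1 k2) ∧
    LocallyEquivalent (controlled u) (Uf γ) := by
  obtain ⟨k1, hk1U, hk1det, hH⟩ := exists_k1 nx ny nz γ hγ
  have hU1 : k1 * star k1 = 1 := Matrix.mem_unitaryGroup_iff.1 hk1U
  have hk1unit : IsUnit k1 := (Matrix.isUnit_iff_isUnit_det k1).2 (hk1det ▸ isUnit_one)
  have hk1inv : k1⁻¹ = star k1 := Matrix.inv_eq_right_inv hU1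
  -- the diagonal factors
  set c : ℂ := ((γ:ℂ)/2) * Complex.I with hc
  have hu' : u = k1 * Matrix.diagonal ![Complex.exp (-(γ:ℂ)*Complex.I),
      Complex.exp ((γ:ℂ)*Complex.I)] * star k1 := by
    rw [hu, hH]
    have hdiag : Complex.I • Matrix.diagonal ![(-γ:ℂ), (γ:ℂ)]
        = Matrix.diagonal ![-(γ:ℂ)*Complex.I, (γ:ℂ)*Complex.I] := by
      ext i j
      fin_cases i <;> fin_cases j <;> simp [Matrix.diagonal_apply] <;> ring
    have hsm : Complex.I • (k1 * Matrix.diagonal ![(-γ:ℂ), (γ:ℂ)] * star k1)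
        = k1 * Matrix.diagonal ![-(γ:ℂ)*Complex.I, (γ:ℂ)*Complex.I] * star k1 := by
      rw [← smul_mul_assoc, ← mul_smul_comm, hdiag]
    rw [hsm, ← hk1inv, Matrix.exp_conj k1 _ hk1unit, hk1inv]
    have hd : NormedSpace.exp (Matrix.diagonal ![-(γ:ℂ)*Complex.I, (γ:ℂ)*Complex.I])
        = Matrix.diagonal ![Complex.exp (-(γ:ℂ)*Complex.I), Complex.exp ((γ:ℂ)*Complex.I)] := by
      rw [Matrix.exp_diagonal]
      have hv : NormedSpace.exp ![-(γ:ℂ)*Complex.I, (γ:ℂ)*Complex.I]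
          = ![Complex.exp (-(γ:ℂ)*Complex.I), Complex.exp ((γ:ℂ)*Complex.I)] := by
        funext i
        fin_cases i <;> simp [Complex.exp_eq_exp_ℂ]
      rw [hv]
    rw [hd]
  -- the two SU(2) gates
  have hexp2 : ∀ a b : ℂ, a + b = 0 → Complex.exp a * Complex.exp b = 1 := by
    intro a b h
    rw [← Complex.exp_add, h, Complex.exp_zero]
  set E : Matrix (Fin 2) (Fin 2) ℂ := Matrix.diagonal ![Complex.exp c, Complex.exp (-c)] with hE
  set E' : Matrix (Fin 2) (Fin 2) ℂ := Matrix.diagonal ![Complex.exp (-c), Complex.exp c] with hE'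
  have hconj2 : (starRingEnd ℂ) (2:ℂ) = 2 := by
    rw [show ((2:ℂ)) = ((2:ℝ):ℂ) by norm_num, Complex.conj_ofReal]
  have hcc : (starRingEnd ℂ) c = -c := by
    rw [hc]
    rw [_root_.map_mul, map_div₀, Complex.conj_ofReal, Complex.conj_I, hconj2]
    ring
  have hEE' : E * E' = 1 := by
    rw [hE, hE', Matrix.diagonal_mul_diagonal]
    ext i j
    fin_cases i <;> fin_cases j <;>
      simp [Matrix.diagonal_apply, Matrix.one_apply] <;>
      exact hexp2 _ _ (by ring)
  have hE'E' : E' * E' = Matrix.diagonal ![Complex.exp (-(γ:ℂ)*Complex.I),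
      Complex.exp ((γ:ℂ)*Complex.I)] := by
    rw [hE', Matrix.diagonal_mul_diagonal]
    ext i j
    fin_cases i <;> fin_cases j <;>
      simp [Matrix.diagonal_apply] <;>
      · rw [← Complex.exp_add]
        congr 1
        rw [hc]
        ring
  have hE'star : E' * star E' = 1 := by
    rw [hE', Matrix.star_eq_conjTranspose, Matrix.diagonal_conjTranspose,
      Matrix.diagonal_mul_diagonal]
    ext i j
    fin_cases i <;> fin_cases j <;>
      simp [Matrix.diagonal_apply, Matrix.one_apply] <;>
      · rw [← Complex.exp_conj]
        apply hexp2
        simp [hcc]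
  have hdetE' : E'.det = 1 := by
    rw [hE', Matrix.det_diagonal, Fin.prod_univ_two]
    show Complex.exp (-c) * Complex.exp c = 1
    exact hexp2 _ _ (by ring)
  set k2 : Matrix (Fin 2) (Fin 2) ℂ := E' * star k1 with hk2
  have hk2U : k2 ∈ Matrix.unitaryGroup (Fin 2) ℂ :=
    mul_mem (Matrix.mem_unitaryGroup_iff.2 hE'star) (Unitary.star_mem hk1U)
  have hk2det : k2.det = 1 := by
    rw [hk2, Matrix.det_mul, hdetE', Matrix.star_eq_conjTranspose, Matrix.det_conjTranspose,
      hk1det, one_mul]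
    exact star_one ℂ
  -- block identities
  have hb1 : k1 * E * k2 = 1 := by
    rw [hk2, mul_assoc, ← mul_assoc E, hEE', one_mul, hU1]
  have hb2 : k1 * E' * k2 = u := by
    rw [hk2, mul_assoc, ← mul_assoc E', hE'E', ← mul_assoc, hu']
  -- main equality
  have key : controlled u = tensor 1 k1 * Uf γ * tensor 1 k2 := by
    rw [tensor_one_eq, tensor_one_eq, Uf_eq, my_reindex_mul, my_reindex_mul]
    show Matrix.reindex finSumFinEquiv finSumFinEquiv (Matrix.fromBlocks 1 0 0 u) = _
    congr 1
    rw [Matrix.fromBlocks_multiply, Matrix.fromBlocks_multiply]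
    simp only [Matrix.mul_zero, Matrix.zero_mul, add_zero, zero_add, Matrix.mul_one, mul_one]
    rw [show Matrix.diagonal ![Complex.exp (((γ:ℂ)/2) * Complex.I),
          Complex.exp (-(((γ:ℂ)/2) * Complex.I))] = E from by rw [hE, hc],
        show Matrix.diagonal ![Complex.exp (-(((γ:ℂ)/2) * Complex.I)),
          Complex.exp (((γ:ℂ)/2) * Complex.I)] = E' from by rw [hE', hc]]
    rw [hb1.symm, hb2.symm]
  refine ⟨⟨k1, k2, ⟨hk1U, hk1det⟩, ⟨hk2U, hk2det⟩, key⟩, ?_⟩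
  refine ⟨0, tensor 1 k1, tensor 1 k2,
    ⟨1, k1, ⟨one_mem _, Matrix.det_one⟩, ⟨hk1U, hk1det⟩, rfl⟩,
    ⟨1, k2, ⟨one_mem _, Matrix.det_one⟩, ⟨hk2U, hk2det⟩, rfl⟩, ?_⟩
  rw [key]
  norm_num
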